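/- If the form Lₙ on ℤ⁴ⁿ splits as an orthogonal direct sum of a standard lattice I_k and another lattice, then k ≤ 4n − 8⌊n/3⌋. -/

import Mathlib

open Matrix
noncomputable section

/-- `Λₙ = ℤ[x]/(xⁿ−1)`, realized as the group ring `ℤ[ℤ/n]`. -/
abbrev Lam (n : ℕ) := AddMonoidAlgebra ℤ (ZMod n)

/-- The monomial `x^d` in `Λₙ`. -/
def Xp (n : ℕ) (d : ℤ) : Lam n := AddMonoidAlgebra.single ((d : ZMod n)) 1

/-- The element `t = x + x⁻¹` of `Λₙ`. -/
def tn (n : ℕ) : Lam n := Xp n 1 + Xp n (-1)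

/-- The matrix `L` over `Λₙ`, obtained by substituting `t = x + x⁻¹`. -/
def Lmat (n : ℕ) : Matrix (Fin 4) (Fin 4) (Lam n) :=
  !![1 + tn n + tn n ^ 2, tn n + tn n ^ 2, 1 + tn n, tn n;
     tn n + tn n ^ 2, 1 + tn n + tn n ^ 2, tn n, 1 + tn n;
     1 + tn n, tn n, 2, 0;
     tn n, 1 + tn n, 0, 2]

/-- The involution of `Λₙ` sending `x` to `x⁻¹`. -/
def conj (n : ℕ) (f : Lam n) : Lam n :=
  AddMonoidAlgebra.ofCoeff (Finsupp.mapDomain (fun a => -a) f.coeff)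

/-- The `Λₙ`-valued hermitian form on `Λₙ⁴` given by the matrix `L`. -/
def herm (n : ℕ) (v w : Fin 4 → Lam n) : Lam n :=
  ∑ i, ∑ j, conj n (v i) * Lmat n i j * w j

/-- The `ℤ`-valued symmetric bilinear form `Lₙ` on `Λₙ⁴ ≅ ℤ⁴ⁿ`:
the coefficient of the identity (`x⁰`) of the `Λₙ`-valued hermitian form. -/
def Ln (n : ℕ) (v w : Fin 4 → Lam n) : ℤ := (herm n v w).coeff 0

/-- The norm element `N = 1 + x + ⋯ + xⁿ⁻¹` of `Λₙ`. -/
def Nn (n : ℕ) : Lam n := ∑ d ∈ Finset.range n, AddMonoidAlgebra.single ((d : ZMod n)) (1 : ℤ)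

/-- The standard `Λₙ`-basis vectors `e₁, e₂, e₃, e₄` of `Λₙ⁴`. -/
def ee (n : ℕ) (i : Fin 4) : Fin 4 → Lam n := Pi.single i 1

/-- `w` is a characteristic vector for `Lₙ`. -/
def IsChar (n : ℕ) (w : Fin 4 → Lam n) : Prop :=
  ∀ v : Fin 4 → Lam n, (2 : ℤ) ∣ Ln n w v - Ln n v v

namespace Aux
variable (n : ℕ)

def negHom : AddHom (ZMod n) (ZMod n) := ⟨fun a => -a, fun a b => neg_add a b⟩

theorem conj_add (f g : Lam n) : conj n (f + g) = conj n f + conj n g :=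
  AddMonoidAlgebra.mapDomain_add _ f g

theorem conj_mul (f g : Lam n) : conj n (f * g) = conj n f * conj n g :=
  AddMonoidAlgebra.mapDomain_mul (negHom n) f g

theorem conj_single (a : ZMod n) (c : ℤ) :
    conj n (AddMonoidAlgebra.single a c) = AddMonoidAlgebra.single (-a) c :=
  AddMonoidAlgebra.mapDomain_single

theorem conj_one : conj n (1 : Lam n) = 1 := by
  rw [AddMonoidAlgebra.one_def, conj_single, neg_zero]

theorem conj_Xp (d : ℤ) : conj n (Xp n d) = Xp n (-d) := by
  rw [Xp, conj_single, Xp]; norm_cast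

theorem conj_tn : conj n (tn n) = tn n := by
  rw [tn, conj_add, conj_Xp, conj_Xp, neg_neg, add_comm]

theorem conj_conj (f : Lam n) : conj n (conj n f) = f := by
  rw [conj, conj, AddMonoidAlgebra.coeff_ofCoeff, ← Finsupp.mapDomain_comp]
  convert AddMonoidAlgebra.ofCoeff_coeff f
  convert Finsupp.mapDomain_id
  funext a; simp

theorem conj_apply_zero (f : Lam n) : (conj n f).coeff 0 = f.coeff 0 := by
  have := Finsupp.mapDomain_apply (f := fun a : ZMod n => -a) neg_injective f.coeff 0
  simpa [conj] using this

theorem conj_neg (f : Lam n) : conj n (-f) = -(conj n f) :=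
  eq_neg_of_add_eq_zero_left (by
    rw [← conj_add, neg_add_cancel]; exact AddMonoidAlgebra.mapDomain_zero _)

end Aux

namespace Aux2
open AddMonoidAlgebra
variable (n : ℕ)

def Nn' (n : ℕ) : Lam n := ∑ d ∈ Finset.range n, AddMonoidAlgebra.single ((d : ZMod n)) (1 : ℤ)

/-- augmentation -/
def eps : Lam n →ₐ[ℤ] ℤ := AddMonoidAlgebra.lift ℤ ℤ (ZMod n) 1

@[simp] theorem eps_single (a : ZMod n) (c : ℤ) : eps n (AddMonoidAlgebra.single a c) = c := by
  rw [eps, AddMonoidAlgebra.lift_single]; simp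

@[simp] theorem eps_Xp (d : ℤ) : eps n (Xp n d) = 1 := eps_single n _ 1

theorem eps_tn : eps n (tn n) = 2 := by rw [tn, map_add]; simp

theorem sum_range_cast {M : Type*} [AddCommMonoid M] [NeZero n] (g : ZMod n → M) :
    ∑ d ∈ Finset.range n, g (d : ZMod n) = ∑ z : ZMod n, g z := by
  refine Finset.sum_nbij' (i := fun d => (d : ZMod n)) (j := fun z => z.val)
    (fun a _ => Finset.mem_univ _) (fun z _ => Finset.mem_range.2 (ZMod.val_lt z))
    (fun a ha => ZMod.val_cast_of_lt (Finset.mem_range.1 ha)) (fun z _ => ZMod.natCast_rightInverse z)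
    (fun a _ => rfl)

theorem Nn'_eq [NeZero n] : Nn' n = ∑ z : ZMod n, AddMonoidAlgebra.single z (1 : ℤ) :=
  sum_range_cast n (fun z => AddMonoidAlgebra.single z (1 : ℤ))

theorem conj_Nn [NeZero n] : conj n (Nn' n) = Nn' n := by
  rw [Nn'_eq, conj]
  simp only [AddMonoidAlgebra.coeff_sum, Finsupp.mapDomain_finset_sum,
    AddMonoidAlgebra.ofCoeff_sum, AddMonoidAlgebra.coeff_single]
  simp_rw [Finsupp.mapDomain_single, AddMonoidAlgebra.ofCoeff_single]
  exact Fintype.sum_equiv (Equiv.neg _) _ _ (fun z => rfl)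

theorem eps_Nn [NeZero n] : eps n (Nn' n) = n := by
  rw [Nn'_eq, map_sum]
  simp [ZMod.card]

theorem Nn_apply_zero [NeZero n] : (Nn' n).coeff 0 = 1 := by
  rw [Nn'_eq]
  rw [AddMonoidAlgebra.coeff_sum, Finsupp.finset_sum_apply]
  simp [AddMonoidAlgebra.coeff_single, Finsupp.single_apply]

theorem Nn_mul_single [NeZero n] (a : ZMod n) (c : ℤ) :
    Nn' n * AddMonoidAlgebra.single a c = c • Nn' n := by
  rw [Nn'_eq, Finset.sum_mul, Finset.smul_sum]
  have h1 : ∀ z : ZMod n, AddMonoidAlgebra.single z (1:ℤ) * AddMonoidAlgebra.single a c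
      = AddMonoidAlgebra.single (z + a) c := by
    intro z; rw [AddMonoidAlgebra.single_mul_single, one_mul]
  have h2 : ∀ z : ZMod n, c • AddMonoidAlgebra.single z (1:ℤ)
      = AddMonoidAlgebra.single z c := by
    intro z; rw [AddMonoidAlgebra.smul_single, smul_eq_mul, mul_one]
  simp_rw [h1, h2]
  exact Fintype.sum_equiv (Equiv.addRight a) _ _ (fun z => rfl)

theorem Nn_mul [NeZero n] (f : Lam n) : Nn' n * f = eps n f • Nn' n := by
  induction f using AddMonoidAlgebra.induction_linear with
  | zero => simp
  | add f g hf hg => rw [mul_add, hf, hg, map_add, add_smul]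
  | single a c => rw [Nn_mul_single, eps_single]

theorem Nn_mul_apply_zero [NeZero n] (f : Lam n) : (Nn' n * f).coeff 0 = eps n f := by
  rw [Nn_mul, AddMonoidAlgebra.coeff_smul, Finsupp.smul_apply, Nn_apply_zero, smul_eq_mul, mul_one]

end Aux2

namespace Aux3
open AddMonoidAlgebra
variable (n : ℕ)

theorem Xp_mul (a b : ℤ) : Xp n a * Xp n b = Xp n (a + b) := by
  rw [Xp, Xp, AddMonoidAlgebra.single_mul_single, one_mul, Xp]
  norm_cast

theorem Xp_zero : Xp n 0 = 1 := by
  simp [Xp, AddMonoidAlgebra.one_def]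

theorem tn_sq : tn n ^ 2 = Xp n 2 + 2 + Xp n (-2) := by
  have e1 : Xp n 1 ^ 2 = Xp n 2 := by rw [pow_two, Xp_mul]; norm_num
  have e2 : Xp n (-1) ^ 2 = Xp n (-2) := by rw [pow_two, Xp_mul]; norm_num
  have e3 : Xp n 1 * Xp n (-1) = 1 := by rw [Xp_mul]; norm_num; exact Xp_zero n
  rw [tn, add_sq, e1, e2, mul_assoc, e3]
  ring

/-- the special element S -/
def Sn (n : ℕ) : Lam n := ∑ j ∈ Finset.range (n / 3), Xp n (3 * j)

theorem conj_Sn : conj n (Sn n) = ∑ j ∈ Finset.range (n / 3), Xp n (-(3 * j)) := by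
  rw [Sn]
  simp only [conj, AddMonoidAlgebra.coeff_sum, Finsupp.mapDomain_finset_sum,
    AddMonoidAlgebra.ofCoeff_sum]
  refine Finset.sum_congr rfl (fun j _ => ?_)
  exact Aux.conj_Xp n _

theorem eps_Sn : Aux2.eps n (Sn n) = n / 3 := by
  rw [Sn, map_sum]
  simp

theorem eps_conj_Sn : Aux2.eps n (conj n (Sn n)) = n / 3 := by
  rw [conj_Sn, map_sum]
  simp

/-- inner product at 0 against S -/
theorem conjS_mul_apply_zero (g : Lam n) :
    (conj n (Sn n) * g).coeff 0 = ∑ j ∈ Finset.range (n / 3), g.coeff ((3 * (j : ℤ) : ℤ) : ZMod n) := by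
  rw [conj_Sn, Finset.sum_mul, AddMonoidAlgebra.coeff_sum, Finsupp.finset_sum_apply]
  refine Finset.sum_congr rfl (fun j _ => ?_)
  rw [Xp, AddMonoidAlgebra.coeff_single_mul_apply, one_mul]
  push_cast
  norm_num

theorem mul_Xp_apply (f : Lam n) (k : ℤ) (b : ZMod n) :
    (f * Xp n k).coeff b = f.coeff (b - (k : ZMod n)) := by
  rw [Xp, AddMonoidAlgebra.coeff_mul_single_apply, mul_one, sub_eq_add_neg]

/-- value of S at a cast point -/
theorem Sn_apply (b : ℤ) : (Sn n).coeff ((b : ZMod n)) =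
    ∑ j ∈ Finset.range (n / 3), (if ((3 * (j:ℤ) : ℤ) : ZMod n) = (b : ZMod n) then (1:ℤ) else 0) := by
  rw [Sn, AddMonoidAlgebra.coeff_sum, Finsupp.finset_sum_apply]
  refine Finset.sum_congr rfl (fun j _ => ?_)
  rw [Xp, AddMonoidAlgebra.coeff_single, Finsupp.single_apply]

theorem dvd_small (d : ℤ) (h : (n : ℤ) ∣ d) (h2 : |d| < n) : d = 0 := by
  rcases h with ⟨c, rfl⟩
  rcases lt_trichotomy c 0 with hc | hc | hc
  · nlinarith [abs_nonneg ((n:ℤ) * c), le_abs_self ((n:ℤ)*c), neg_abs_le ((n:ℤ)*c)]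
  · simp [hc]
  · nlinarith [le_abs_self ((n:ℤ)*c)]

theorem cast_eq_cast_iff (a b : ℤ) : ((a : ZMod n) = (b : ZMod n)) ↔ (n : ℤ) ∣ b - a := by
  rw [ZMod.intCast_eq_intCast_iff]
  exact Int.modEq_iff_dvd

end Aux3

namespace Aux4
open AddMonoidAlgebra Aux3
variable (n : ℕ)

theorem Sn_val_self {j : ℕ} (hj : j ∈ Finset.range (n / 3)) :
    (Sn n).coeff ((3 * (j : ℤ) : ℤ) : ZMod n) = 1 := by
  rw [Sn_apply]
  rw [Finset.sum_eq_single_of_mem j hj]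
  · simp
  · intro j' hj' hne
    rw [if_neg]
    rw [cast_eq_cast_iff]
    intro hdvd
    have hb : |(3 * (j:ℤ)) - 3 * (j':ℤ)| < n := by
      rw [abs_lt]
      have h1 : j < n / 3 := Finset.mem_range.1 hj
      have h2 : j' < n / 3 := Finset.mem_range.1 hj'
      constructor <;> push_cast <;> omega
    have := dvd_small n _ hdvd hb
    omega

theorem Sn_val_ne (b : ℤ) (h : ∀ j' : ℕ, j' < n / 3 → ¬ ((n:ℤ) ∣ b - 3 * j')) :
    (Sn n).coeff ((b : ZMod n)) = 0 := by
  rw [Sn_apply]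
  refine Finset.sum_eq_zero (fun j' hj' => ?_)
  rw [if_neg]
  rw [cast_eq_cast_iff]
  intro hdvd
  exact h j' (Finset.mem_range.1 hj') hdvd

theorem Sn_val_off {j : ℕ} (hj : j ∈ Finset.range (n / 3)) (k : ℤ)
    (hk : k = 1 ∨ k = -1 ∨ k = 2 ∨ k = -2) :
    (Sn n).coeff (((3 * (j : ℤ) - k : ℤ)) : ZMod n) = 0 := by
  have h1 : j < n / 3 := Finset.mem_range.1 hj
  refine Sn_val_ne n _ (fun j' hj' hdvd => ?_)
  have hb : |(3 * (j:ℤ) - k) - 3 * (j':ℤ)| < n := by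
    rw [abs_lt]
    constructor <;> push_cast <;> omega
  have := dvd_small n _ hdvd hb
  omega

theorem keyS : ((conj n (Sn n) * (Sn n * (1 + tn n + tn n ^ 2)) : Lam n)).coeff 0
    = 3 * ((n / 3 : ℕ) : ℤ) := by
  have hexp : Sn n * (1 + tn n + tn n ^ 2)
      = Sn n + Sn n + Sn n + Sn n * Xp n 1 + Sn n * Xp n (-1)
        + Sn n * Xp n 2 + Sn n * Xp n (-2) := by
    rw [tn_sq, tn]
    ring
  rw [conjS_mul_apply_zero]
  have hterm : ∀ j ∈ Finset.range (n / 3),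
      ((Sn n * (1 + tn n + tn n ^ 2) : Lam n)).coeff ((3 * (j:ℤ) : ℤ) : ZMod n) = 3 := by
    intro j hj
    rw [hexp]
    simp only [AddMonoidAlgebra.coeff_add, Finsupp.add_apply]
    rw [mul_Xp_apply, mul_Xp_apply, mul_Xp_apply, mul_Xp_apply]
    have c1 : ((3 * (j:ℤ) : ℤ) : ZMod n) - ((1 : ℤ) : ZMod n) = ((3 * (j:ℤ) - 1 : ℤ) : ZMod n) := by
      push_cast; ring
    have c2 : ((3 * (j:ℤ) : ℤ) : ZMod n) - ((-1 : ℤ) : ZMod n) = ((3 * (j:ℤ) - (-1) : ℤ) : ZMod n) := by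
      push_cast; ring
    have c3 : ((3 * (j:ℤ) : ℤ) : ZMod n) - ((2 : ℤ) : ZMod n) = ((3 * (j:ℤ) - 2 : ℤ) : ZMod n) := by
      push_cast; ring
    have c4 : ((3 * (j:ℤ) : ℤ) : ZMod n) - ((-2 : ℤ) : ZMod n) = ((3 * (j:ℤ) - (-2) : ℤ) : ZMod n) := by
      push_cast; ring
    rw [c1, c2, c3, c4]
    rw [Sn_val_self n hj, Sn_val_off n hj 1 (by norm_num), Sn_val_off n hj (-1) (by norm_num),
      Sn_val_off n hj 2 (by norm_num), Sn_val_off n hj (-2) (by norm_num)]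
    norm_num
  rw [Finset.sum_congr rfl hterm, Finset.sum_const, Finset.card_range, nsmul_eq_mul]
  ring

theorem inner0 (f g : Lam n) : (conj n f * g).coeff 0 = f.coeff.sum fun a c => c * g.coeff a := by
  induction f using AddMonoidAlgebra.induction_linear with
  | zero => simp [conj]
  | add f₁ f₂ h1 h2 =>
      rw [Aux.conj_add, add_mul, AddMonoidAlgebra.coeff_add, Finsupp.add_apply, h1, h2]
      rw [AddMonoidAlgebra.coeff_add, Finsupp.sum_add_index (by simp) (by intros; rw [add_mul])]
  | single a c =>
      rw [Aux.conj_single, AddMonoidAlgebra.coeff_single_mul_apply, AddMonoidAlgebra.coeff_single,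
        Finsupp.sum_single_index]
      · rw [neg_neg, add_zero]
      · rw [zero_mul]

theorem inner0_nonneg (f : Lam n) : 0 ≤ (conj n f * f).coeff 0 := by
  rw [inner0, Finsupp.sum]
  refine Finset.sum_nonneg (fun a ha => ?_)
  exact mul_self_nonneg _

theorem eps_eq_sum (f : Lam n) : Aux2.eps n f = f.coeff.sum fun _ c => c := by
  induction f using AddMonoidAlgebra.induction_linear with
  | zero => simp
  | add f₁ f₂ h1 h2 =>
      rw [map_add, h1, h2, AddMonoidAlgebra.coeff_add, Finsupp.sum_add_index (by simp) (by intros; rfl)]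
  | single a c => rw [Aux2.eps_single, AddMonoidAlgebra.coeff_single, Finsupp.sum_single_index rfl]

theorem inner0_parity (f : Lam n) : 2 ∣ (conj n f * f).coeff 0 - Aux2.eps n f := by
  rw [inner0, eps_eq_sum, Finsupp.sum, Finsupp.sum, ← Finset.sum_sub_distrib]
  refine Finset.dvd_sum (fun a ha => ?_)
  have : f.coeff a * f.coeff a - f.coeff a = (f.coeff a - 1) * f.coeff a := by ring
  rw [this]
  rcases Int.even_or_odd (f.coeff a) with he | ho
  · exact Dvd.dvd.mul_left he.two_dvd _
  · have : (2:ℤ) ∣ f.coeff a - 1 := by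
      rcases ho with ⟨m, hm⟩; exact ⟨m, by omega⟩
    exact this.mul_right _

end Aux4

namespace Aux5
variable (n : ℕ)

theorem conj_two : conj n (2 : Lam n) = 2 := by
  have : (2 : Lam n) = 1 + 1 := by norm_num
  rw [this, Aux.conj_add, Aux.conj_one]

theorem herm_expand (v w : Fin 4 → Lam n) : herm n v w =
    conj n (v 0) * (1 + tn n + tn n ^ 2) * w 0 + conj n (v 0) * (tn n + tn n ^ 2) * w 1
      + conj n (v 0) * (1 + tn n) * w 2 + conj n (v 0) * tn n * w 3
    + (conj n (v 1) * (tn n + tn n ^ 2) * w 0 + conj n (v 1) * (1 + tn n + tn n ^ 2) * w 1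
      + conj n (v 1) * (tn n) * w 2 + conj n (v 1) * (1 + tn n) * w 3)
    + (conj n (v 2) * (1 + tn n) * w 0 + conj n (v 2) * (tn n) * w 1
      + conj n (v 2) * 2 * w 2)
    + (conj n (v 3) * (tn n) * w 0 + conj n (v 3) * (1 + tn n) * w 1
      + conj n (v 3) * 2 * w 3) := by
  rw [herm, Fin.sum_univ_four]
  simp only [Fin.sum_univ_four, Lmat, Matrix.cons_val_zero, Matrix.cons_val_one,
    Matrix.head_cons, Matrix.cons_val_two, Matrix.tail_cons, Matrix.cons_val_three,
    Matrix.head_fin_const, Matrix.cons_val', Matrix.empty_val', Matrix.cons_val_fin_one,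
    Matrix.of_apply]
  ring

end Aux5

namespace Aux6
open Aux Aux2 Aux3 Aux4 Aux5
variable (n : ℕ)

theorem add_apply0 {n : ℕ} (f g : Lam n) (z : ZMod n) : (f + g).coeff z = f.coeff z + g.coeff z :=
  Finsupp.add_apply f.coeff g.coeff z

theorem neg_apply0 {n : ℕ} (f : Lam n) (z : ZMod n) : (-f).coeff z = -(f.coeff z) :=
  Finsupp.neg_apply f.coeff z

theorem herm_sos (v : Fin 4 → Lam n) :
    herm n v v + herm n v v =
      conj n ((1 + tn n) * v 0 + tn n * v 1 + 2 * v 2)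
          * ((1 + tn n) * v 0 + tn n * v 1 + 2 * v 2)
        + conj n (tn n * v 0 + (1 + tn n) * v 1 + 2 * v 3)
          * (tn n * v 0 + (1 + tn n) * v 1 + 2 * v 3)
        + conj n (v 0) * v 0 + conj n (v 1) * v 1 := by
  rw [herm_expand]
  simp only [conj_add, conj_mul, conj_one, conj_tn, conj_two]
  ring

theorem Ln_nonneg (v : Fin 4 → Lam n) : 0 ≤ Ln n v v := by
  have h := congrArg (fun f : Lam n => f.coeff 0) (herm_sos n v)
  simp only [add_apply0] at h
  have h0 := Aux4.inner0_nonneg n ((1 + tn n) * v 0 + tn n * v 1 + 2 * v 2)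
  have h1 := Aux4.inner0_nonneg n (tn n * v 0 + (1 + tn n) * v 1 + 2 * v 3)
  have h2 := Aux4.inner0_nonneg n (v 0)
  have h3 := Aux4.inner0_nonneg n (v 1)
  have : Ln n v v + Ln n v v = _ := h
  linarith [this]

end Aux6

namespace Aux7
open Aux Aux2 Aux3 Aux4 Aux5 Aux6
variable (n : ℕ)

theorem conj_zero : conj n (0 : Lam n) = 0 := AddMonoidAlgebra.mapDomain_zero _

theorem herm_self_pairs (v : Fin 4 → Lam n) :
    herm n v v =
      (conj n (v 0) * v 0 + conj n (v 0) * v 0 + conj n (v 0) * v 0)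
      + (conj n (v 1) * v 1 + conj n (v 1) * v 1 + conj n (v 1) * v 1)
      + (conj n (v 2) * v 2 + conj n (v 2) * v 2)
      + (conj n (v 3) * v 3 + conj n (v 3) * v 3)
      + ((conj n (v 0) * v 0 * (Xp n 1 + Xp n 2)
          + conj n (v 1) * v 1 * (Xp n 1 + Xp n 2)
          + conj n (v 0) * v 1 * (tn n + tn n ^ 2)
          + conj n (v 0) * v 2 * (1 + tn n)
          + conj n (v 0) * v 3 * tn n
          + conj n (v 1) * v 2 * tn n
          + conj n (v 1) * v 3 * (1 + tn n))
        + conj n (conj n (v 0) * v 0 * (Xp n 1 + Xp n 2)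
          + conj n (v 1) * v 1 * (Xp n 1 + Xp n 2)
          + conj n (v 0) * v 1 * (tn n + tn n ^ 2)
          + conj n (v 0) * v 2 * (1 + tn n)
          + conj n (v 0) * v 3 * tn n
          + conj n (v 1) * v 2 * tn n
          + conj n (v 1) * v 3 * (1 + tn n))) := by
  rw [herm_expand]
  simp only [tn_sq]
  simp only [tn, conj_add, conj_mul, conj_one, conj_two, Aux.conj_Xp, conj_conj, neg_neg]
  ring

theorem Ln_self_parity (v : Fin 4 → Lam n) :
    2 ∣ Ln n v v - (eps n (v 0) + eps n (v 1)) := by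
  have h := congrArg (fun f : Lam n => f.coeff 0) (herm_self_pairs n v)
  simp only [add_apply0, Aux.conj_apply_zero] at h
  have p0 := inner0_parity n (v 0)
  have p1 := inner0_parity n (v 1)
  have hL : Ln n v v = (herm n v v).coeff 0 := rfl
  rw [hL, h]
  omega

end Aux7

namespace Aux8
open Aux Aux2 Aux3 Aux4 Aux5 Aux6 Aux7
variable (n : ℕ)

def wv (n : ℕ) : Fin 4 → Lam n := ![-(2 * Aux3.Sn n), 0, Aux2.Nn' n, Aux2.Nn' n]

theorem wv0 : wv n 0 = -(2 * Aux3.Sn n) := rfl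
theorem wv1 : wv n 1 = 0 := rfl
theorem wv2 : wv n 2 = Aux2.Nn' n := rfl
theorem wv3 : wv n 3 = Aux2.Nn' n := rfl

theorem herm_wv (v : Fin 4 → Lam n) [NeZero n] :
    herm n (wv n) v =
      -((conj n (Sn n) * ((1 + tn n + tn n ^ 2) * v 0 + (tn n + tn n ^ 2) * v 1
          + (1 + tn n) * v 2 + tn n * v 3))
        + (conj n (Sn n) * ((1 + tn n + tn n ^ 2) * v 0 + (tn n + tn n ^ 2) * v 1
          + (1 + tn n) * v 2 + tn n * v 3)))
      + Nn' n * (((1 + tn n) * v 0 + tn n * v 1 + 2 * v 2)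
          + (tn n * v 0 + (1 + tn n) * v 1 + 2 * v 3)) := by
  rw [herm_expand, wv0, wv1, wv2, wv3]
  simp only [conj_neg, conj_mul, conj_two, conj_zero, Aux2.conj_Nn]
  ring

theorem Ln_wv_parity [NeZero n] (v : Fin 4 → Lam n) :
    2 ∣ Ln n (wv n) v - (eps n (v 0) + eps n (v 1)) := by
  have h := congrArg (fun f : Lam n => f.coeff 0) (herm_wv n v)
  simp only [add_apply0, neg_apply0] at h
  rw [Aux2.Nn_mul_apply_zero] at h
  have hG : eps n (((1 + tn n) * v 0 + tn n * v 1 + 2 * v 2)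
      + (tn n * v 0 + (1 + tn n) * v 1 + 2 * v 3))
      = 5 * eps n (v 0) + 5 * eps n (v 1) + 2 * eps n (v 2) + 2 * eps n (v 3) := by
    simp only [_root_.map_add, _root_.map_mul, _root_.map_one, _root_.map_ofNat, Aux2.eps_tn]
    ring
  rw [hG] at h
  have hL : Ln n (wv n) v = (herm n (wv n) v).coeff 0 := rfl
  rw [hL, h]
  omega

theorem Ln_wv_norm [NeZero n] :
    Ln n (wv n) (wv n) = 4 * (n : ℤ) - 8 * ((n / 3 : ℕ) : ℤ) := by
  have hid : herm n (wv n) (wv n) =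
      ((conj n (Sn n) * (Sn n * (1 + tn n + tn n ^ 2)))
        + (conj n (Sn n) * (Sn n * (1 + tn n + tn n ^ 2)))
        + (conj n (Sn n) * (Sn n * (1 + tn n + tn n ^ 2)))
        + (conj n (Sn n) * (Sn n * (1 + tn n + tn n ^ 2))))
      + Nn' n * (-((conj n (Sn n) * ((1 + tn n) + tn n)
            + conj n (Sn n) * ((1 + tn n) + tn n))
          + (((1 + tn n) + tn n) * Sn n + ((1 + tn n) + tn n) * Sn n))
        + (Nn' n + Nn' n + Nn' n + Nn' n)) := by
    rw [herm_expand, wv0, wv1, wv2, wv3]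
    simp only [conj_neg, conj_mul, conj_two, conj_zero, Aux2.conj_Nn]
    ring
  have h := congrArg (fun f : Lam n => f.coeff 0) hid
  simp only [add_apply0, neg_apply0] at h
  rw [Aux2.Nn_mul_apply_zero, Aux4.keyS] at h
  have hG : eps n (-((conj n (Sn n) * ((1 + tn n) + tn n)
            + conj n (Sn n) * ((1 + tn n) + tn n))
          + (((1 + tn n) + tn n) * Sn n + ((1 + tn n) + tn n) * Sn n))
        + (Nn' n + Nn' n + Nn' n + Nn' n))
      = -20 * ((n / 3 : ℕ) : ℤ) + 4 * (n : ℤ) := by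
    simp only [_root_.map_add, _root_.map_neg, _root_.map_mul, _root_.map_one, Aux2.eps_tn, Aux3.eps_Sn,
      Aux3.eps_conj_Sn, Aux2.eps_Nn]
    omega
  rw [hG] at h
  have hL : Ln n (wv n) (wv n) = (herm n (wv n) (wv n)).coeff 0 := rfl
  rw [hL, h]
  ring

end Aux8

/-- If the form `Lₙ` on `ℤ⁴ⁿ` splits as an orthogonal direct sum of a standard
lattice `I_k` and another lattice, then `k ≤ 4n − 8⌊n/3⌋`. -/
theorem stmt_13 (n : ℕ) (hn : 1 ≤ n) (k m : ℕ)
    (B : Matrix (Fin m) (Fin m) ℤ) (hBs : Bᵀ = B)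
    (φ : (Fin 4 → Lam n) ≃ₗ[ℤ] (Fin k → ℤ) × (Fin m → ℤ))
    (hφ : ∀ v w : Fin 4 → Lam n,
      Ln n v w = dotProduct (φ v).1 (φ w).1
        + dotProduct (φ v).2 (B.mulVec (φ w).2)) :
    k ≤ 4 * n - 8 * (n / 3) := by
  haveI : NeZero n := ⟨by omega⟩
  have hpos : ∀ v, 0 ≤ Ln n v v := Aux6.Ln_nonneg n
  have hchar : ∀ v, 2 ∣ Ln n (Aux8.wv n) v - Ln n v v := by
    intro v
    have h1 := Aux8.Ln_wv_parity n v
    have h2 := Aux7.Ln_self_parity n v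
    omega
  have hnorm := Aux8.Ln_wv_norm n
  set a := (φ (Aux8.wv n)).1 with ha
  set b := (φ (Aux8.wv n)).2 with hb
  have hbB : 0 ≤ dotProduct b (B.mulVec b) := by
    have h := hφ (φ.symm (0, b)) (φ.symm (0, b))
    rw [φ.apply_symm_apply] at h
    simp only [zero_dotProduct] at h
    linarith [hpos (φ.symm (0, b))]
  have hodd : ∀ i : Fin k, 2 ∣ a i - 1 := by
    intro i
    have h := hchar (φ.symm (Pi.single i 1, 0))
    have h1 := hφ (Aux8.wv n) (φ.symm (Pi.single i 1, 0))
    have h2 := hφ (φ.symm (Pi.single i 1, 0)) (φ.symm (Pi.single i 1, 0))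
    rw [φ.apply_symm_apply] at h1 h2
    simp only [dotProduct_single, Matrix.mulVec_zero, dotProduct_zero,
      Pi.single_eq_same, mul_one, add_zero, zero_dotProduct] at h1 h2
    rw [h1, h2] at h
    simpa using h
  have hk : (k : ℤ) ≤ dotProduct a a := by
    rw [dotProduct]
    have : ∀ i : Fin k, (1 : ℤ) ≤ a i * a i := by
      intro i
      have hne : a i ≠ 0 := by have := hodd i; omega
      have h1 := Int.one_le_abs hne
      nlinarith [abs_nonneg (a i), abs_mul_abs_self (a i)]
    calc (k : ℤ) = ∑ _i : Fin k, (1 : ℤ) := by simp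
    _ ≤ ∑ i, a i * a i := Finset.sum_le_sum (fun i _ => this i)
  have hww := hφ (Aux8.wv n) (Aux8.wv n)
  rw [hnorm] at hww
  have hfin : (k : ℤ) ≤ 4 * (n : ℤ) - 8 * ((n / 3 : ℕ) : ℤ) := by
    rw [← ha, ← hb] at hww
    linarith
  omega

end
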